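/- Let 𝕜 be a field, ι a finite index type, (V_i)_{i∈ι} a family of 𝕜-vector spaces, and v an element of the tensor product ⨂_{i∈ι} V_i. For each j ∈ ι let U_j(v) be the j-th minimal subspace of v. Then: (i) each U_j(v) is finite-dimensional; (ii) v lies in the range of the canonical linear map ⨂_{i∈ι} U_i(v) → ⨂_{i∈ι} V_i induced by the inclusions U_i(v) ↪ V_i; (iii) (minimality) for every family (N_i)_{i∈ι} of subspaces N_i ≤ V_i such that v lies in the range of the canonical map ⨂_{i∈ι} N_i → ⨂_{i∈ι} V_i induced by the inclusions, one has U_j(v) ≤ N_j for every j ∈ ι. -/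

import Mathlib

open scoped TensorProduct

section
variable {ι : Type*} [Fintype ι] [deq : DecidableEq ι] {𝕜 : Type*} [Field 𝕜]
  {V : ι → Type*} [∀ i, AddCommGroup (V i)] [∀ i, Module 𝕜 (V i)]

/-- The multilinear map `(m_i)_{i} ↦ (∏_{k ≠ j} φ_k (m_k)) • m_j`. -/
def contractML (j : ι) (φ : ∀ k, V k →ₗ[𝕜] 𝕜) : MultilinearMap 𝕜 V (V j) where
  toFun m := (∏ k ∈ Finset.univ.erase j, φ k (m k)) • m j
  map_update_add' := by
    intro inst m k x y
    have h : inst = deq := Subsingleton.elim _ _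
    subst h
    try dsimp only
    rcases eq_or_ne k j with rfl | hkj
    · have hprod : ∀ z : V k,
          (∏ i ∈ Finset.univ.erase k, φ i (Function.update m k z i))
            = ∏ i ∈ Finset.univ.erase k, φ i (m i) := fun z =>
        Finset.prod_congr rfl fun i hi => by
          rw [Function.update_of_ne (Finset.ne_of_mem_erase hi)]
      rw [hprod, hprod, hprod, Function.update_self, Function.update_self,
        Function.update_self, smul_add]
    · have hmem : k ∈ Finset.univ.erase j := Finset.mem_erase.2 ⟨hkj, Finset.mem_univ k⟩
      have hprod : ∀ z : V k,
          (∏ i ∈ Finset.univ.erase j, φ i (Function.update m k z i))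
            = φ k z * ∏ i ∈ (Finset.univ.erase j) \ {k}, φ i (m i) := by
        intro z
        have h1 : ∀ i, φ i (Function.update m k z i)
            = Function.update (fun i => φ i (m i)) k (φ k z) i := fun i =>
          Function.apply_update (fun i v => φ i v) m k z i
        rw [Finset.prod_congr rfl (fun i _ => h1 i)]
        exact Finset.prod_update_of_mem hmem _ _
      have hj : ∀ z : V k, Function.update m k z j = m j := fun z =>
        Function.update_of_ne (Ne.symm hkj) _ _
      rw [hprod, hprod, hprod, hj, hj, hj, map_add, add_mul, add_smul]
  map_update_smul' := by
    intro inst m k c x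
    have h : inst = deq := Subsingleton.elim _ _
    subst h
    try dsimp only
    rcases eq_or_ne k j with rfl | hkj
    · have hprod : ∀ z : V k,
          (∏ i ∈ Finset.univ.erase k, φ i (Function.update m k z i))
            = ∏ i ∈ Finset.univ.erase k, φ i (m i) := fun z =>
        Finset.prod_congr rfl fun i hi => by
          rw [Function.update_of_ne (Finset.ne_of_mem_erase hi)]
      rw [hprod, hprod, Function.update_self, Function.update_self, smul_comm]
    · have hmem : k ∈ Finset.univ.erase j := Finset.mem_erase.2 ⟨hkj, Finset.mem_univ k⟩
      have hprod : ∀ z : V k,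
          (∏ i ∈ Finset.univ.erase j, φ i (Function.update m k z i))
            = φ k z * ∏ i ∈ (Finset.univ.erase j) \ {k}, φ i (m i) := by
        intro z
        have h1 : ∀ i, φ i (Function.update m k z i)
            = Function.update (fun i => φ i (m i)) k (φ k z) i := fun i =>
          Function.apply_update (fun i v => φ i v) m k z i
        rw [Finset.prod_congr rfl (fun i _ => h1 i)]
        exact Finset.prod_update_of_mem hmem _ _
      have hj : ∀ z : V k, Function.update m k z j = m j := fun z =>
        Function.update_of_ne (Ne.symm hkj) _ _
      rw [hprod, hprod, hj, hj, map_smul, smul_eq_mul, mul_assoc, mul_smul]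

/-- The contraction `id_j ⊗ φ : ⨂ᵢ Vᵢ → V j` obtained by lifting the multilinear map
`(m_i)ᵢ ↦ (∏_{k ≠ j} φ_k (m_k)) • m_j`. -/
noncomputable def contract (j : ι) (φ : ∀ k, V k →ₗ[𝕜] 𝕜) :
    (⨂[𝕜] i, V i) →ₗ[𝕜] V j :=
  PiTensorProduct.lift (contractML j φ)

/-- The `j`-th minimal subspace of a tensor `v`. -/
noncomputable def minimalSubspace (j : ι) (v : ⨂[𝕜] i, V i) : Submodule 𝕜 (V j) :=
  Submodule.span 𝕜 {x | ∃ φ : ∀ k, V k →ₗ[𝕜] 𝕜, contract j φ v = x}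

theorem contract_tprod (j : ι) (φ : ∀ k, V k →ₗ[𝕜] 𝕜) (m : ∀ i, V i) :
    contract j φ (PiTensorProduct.tprod 𝕜 m)
      = (∏ k ∈ Finset.univ.erase j, φ k (m k)) • m j := by
  simp [contract, contractML, PiTensorProduct.lift.tprod]

theorem contract_map {W : ι → Type*} [∀ i, AddCommGroup (W i)] [∀ i, Module 𝕜 (W i)]
    (j : ι) (φ : ∀ k, V k →ₗ[𝕜] 𝕜) (f : ∀ i, W i →ₗ[𝕜] V i) (x : ⨂[𝕜] i, W i) :
    contract j φ (PiTensorProduct.map f x)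
      = f j (contract j (fun k => φ k ∘ₗ f k) x) := by
  have h : (contract j φ) ∘ₗ (PiTensorProduct.map f)
      = (f j) ∘ₗ contract j (fun k => φ k ∘ₗ f k) := by
    ext m
    simp [contract_tprod, PiTensorProduct.map_tprod, map_smul]
  exact DFunLike.congr_fun h x

theorem contract_congr (j : ι) {φ ψ : ∀ k, V k →ₗ[𝕜] 𝕜} (h : ∀ k, k ≠ j → φ k = ψ k) :
    contract j φ = contract j ψ := by
  ext m
  simp only [LinearMap.compMultilinearMap_apply, contract_tprod]
  congr 1
  exact Finset.prod_congr rfl fun k hk => by rw [h k (Finset.ne_of_mem_erase hk)]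

theorem minimalSubspace_le (v : ⨂[𝕜] i, V i) (N : ∀ i, Submodule 𝕜 (V i))
    (hv : v ∈ LinearMap.range (PiTensorProduct.map fun i => (N i).subtype)) (j : ι) :
    minimalSubspace j v ≤ N j := by
  obtain ⟨w, rfl⟩ := hv
  apply Submodule.span_le.2
  rintro x ⟨φ, rfl⟩
  rw [contract_map]
  exact Submodule.coe_mem _

theorem range_map_subtype_mono {N M : ∀ i, Submodule 𝕜 (V i)} (h : ∀ i, N i ≤ M i) :
    LinearMap.range (PiTensorProduct.map fun i => (N i).subtype) ≤
      LinearMap.range (PiTensorProduct.map fun i => (M i).subtype) := by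
  rintro _ ⟨w, rfl⟩
  refine ⟨PiTensorProduct.map (fun i => Submodule.inclusion (h i)) w, ?_⟩
  rw [← LinearMap.comp_apply, ← PiTensorProduct.map_comp]
  congr 1

theorem exists_findim (v : ⨂[𝕜] i, V i) :
    ∃ W : ∀ i, Submodule 𝕜 (V i), (∀ i, FiniteDimensional 𝕜 (W i)) ∧
      v ∈ LinearMap.range (PiTensorProduct.map fun i => (W i).subtype) := by
  have hmem : v ∈ Submodule.span 𝕜 (Set.range (PiTensorProduct.tprod 𝕜)) := by
    rw [PiTensorProduct.span_tprod_eq_top]; trivial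
  induction hmem using Submodule.span_induction with
  | mem x hx =>
    obtain ⟨m, rfl⟩ := hx
    refine ⟨fun i => Submodule.span 𝕜 {m i}, fun i => inferInstance,
      ⟨PiTensorProduct.tprod 𝕜 (fun i => ⟨m i, Submodule.mem_span_singleton_self _⟩), ?_⟩⟩
    simp [PiTensorProduct.map_tprod]
  | zero => exact ⟨fun _ => ⊥, fun i => inferInstance, Submodule.zero_mem _⟩
  | add x y _ _ hx hy =>
    obtain ⟨W₁, h₁, hx⟩ := hx
    obtain ⟨W₂, h₂, hy⟩ := hy
    refine ⟨fun i => W₁ i ⊔ W₂ i, fun i => inferInstance, Submodule.add_mem _ ?_ ?_⟩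
    · exact range_map_subtype_mono (fun i => le_sup_left) hx
    · exact range_map_subtype_mono (fun i => le_sup_right) hy
  | smul c x _ hx =>
    obtain ⟨W, h, hx⟩ := hx
    exact ⟨W, h, Submodule.smul_mem _ c hx⟩

theorem contract_separating {W : ι → Type*} [∀ i, AddCommGroup (W i)] [∀ i, Module 𝕜 (W i)]
    [∀ i, FiniteDimensional 𝕜 (W i)] (j : ι) (z : ⨂[𝕜] i, W i)
    (h : ∀ ψ : ∀ k, W k →ₗ[𝕜] 𝕜, contract j ψ z = 0) : z = 0 := by
  classical
  set b : ∀ i, Module.Basis (Fin (Module.finrank 𝕜 (W i))) 𝕜 (W i) :=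
    fun i => Module.finBasis 𝕜 (W i) with hb
  set L : (∀ i, Fin (Module.finrank 𝕜 (W i))) → ((⨂[𝕜] i, W i) →ₗ[𝕜] 𝕜) :=
    fun f => PiTensorProduct.lift
      ((MultilinearMap.mkPiAlgebra 𝕜 ι 𝕜).compLinearMap fun i => (b i).coord (f i)) with hL
  have hLtprod : ∀ f m, L f (PiTensorProduct.tprod 𝕜 m) = ∏ i, (b i).repr (m i) (f i) := by
    intro f m
    simp [hL, PiTensorProduct.lift.tprod, MultilinearMap.mkPiAlgebra_apply, Module.Basis.coord_apply]
  have hLz : ∀ f, L f z = 0 := by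
    intro f
    have key : L f = ((b j).coord (f j)) ∘ₗ contract j (fun k => (b k).coord (f k)) := by
      ext m
      simp only [LinearMap.compMultilinearMap_apply, LinearMap.comp_apply, contract_tprod,
        map_smul, smul_eq_mul, hLtprod, Module.Basis.coord_apply]
      rw [← Finset.prod_erase_mul Finset.univ _ (Finset.mem_univ j)]
    rw [key, LinearMap.comp_apply, h, map_zero]
  have hS : (LinearMap.id : (⨂[𝕜] i, W i) →ₗ[𝕜] (⨂[𝕜] i, W i)) =
      ∑ f : ∀ i, Fin (Module.finrank 𝕜 (W i)),
        (L f).smulRight (PiTensorProduct.tprod 𝕜 (fun i => b i (f i))) := by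
    ext m
    simp only [LinearMap.compMultilinearMap_apply, LinearMap.id_apply, LinearMap.coe_sum,
      Finset.sum_apply, LinearMap.smulRight_apply, hLtprod]
    conv_lhs => rw [show m = (fun i => ∑ β, (b i).repr (m i) β • b i β) from
      funext fun i => ((b i).sum_repr (m i)).symm]
    rw [MultilinearMap.map_sum]
    exact Finset.sum_congr rfl fun f _ => MultilinearMap.map_smul_univ _ _ _
  have hzeq := DFunLike.congr_fun hS z
  simpa [hLz] using hzeq

theorem map_update_proj (v : ⨂[𝕜] i, V i) (W : ∀ i, Submodule 𝕜 (V i))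
    (hW : ∀ i, FiniteDimensional 𝕜 (W i)) (w : ⨂[𝕜] i, (W i : Type _))
    (hv : PiTensorProduct.map (fun i => (W i).subtype) w = v)
    (j : ι) (P : V j →ₗ[𝕜] V j)
    (hP1 : ∀ x ∈ minimalSubspace j v, P x = x)
    (hP2 : ∀ x, P x ∈ minimalSubspace j v) :
    PiTensorProduct.map
      (Function.update (fun i => (LinearMap.id : V i →ₗ[𝕜] V i)) j P) v = v := by
  have hUW : minimalSubspace j v ≤ W j := minimalSubspace_le v W ⟨w, hv⟩ j
  set F := Function.update (fun i => (LinearMap.id : V i →ₗ[𝕜] V i)) j P with hF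
  have hPW : ∀ x ∈ W j, P x ∈ W j := fun x _ => hUW (hP2 x)
  set Q : ∀ i, (W i : Type _) →ₗ[𝕜] (W i : Type _) :=
    Function.update (fun i => (LinearMap.id : (W i : Type _) →ₗ[𝕜] (W i : Type _))) j
      (P.restrict hPW) with hQ
  have hcomm : ∀ i, F i ∘ₗ (W i).subtype = (W i).subtype ∘ₗ Q i := by
    intro i
    rcases eq_or_ne i j with rfl | hij
    · simp only [hF, hQ, Function.update_self]
      ext x
      simp [LinearMap.restrict_coe_apply]
    · simp only [hF, hQ, Function.update_of_ne hij]
      ext x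
      simp
  have hmapcomm : PiTensorProduct.map F ∘ₗ PiTensorProduct.map (fun i => (W i).subtype)
      = PiTensorProduct.map (fun i => (W i).subtype) ∘ₗ PiTensorProduct.map Q := by
    rw [← PiTensorProduct.map_comp, ← PiTensorProduct.map_comp]
    congr 1
    funext i
    exact hcomm i
  haveI : ∀ i, FiniteDimensional 𝕜 (W i) := hW
  have hz : PiTensorProduct.map Q w - w = 0 := by
    apply contract_separating (𝕜 := 𝕜) j
    intro ψ
    choose φ hφ using fun k => LinearMap.exists_extend (ψ k)
    apply Submodule.injective_subtype (W j)
    rw [map_zero]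
    have h1 : ((W j).subtype) (contract j ψ (PiTensorProduct.map Q w - w))
        = contract j φ (PiTensorProduct.map (fun i => (W i).subtype)
            (PiTensorProduct.map Q w - w)) := by
      rw [contract_map, show (fun k => φ k ∘ₗ (W k).subtype) = ψ from funext hφ]
    rw [h1, map_sub, map_sub]
    have h2 : PiTensorProduct.map (fun i => (W i).subtype) (PiTensorProduct.map Q w)
        = PiTensorProduct.map F v := by
      rw [← LinearMap.comp_apply, ← hmapcomm, LinearMap.comp_apply, hv]
    rw [h2, hv]
    have h3 : contract j φ (PiTensorProduct.map F v) = P (contract j φ v) := by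
      rw [contract_map]
      have e1 : F j = P := Function.update_self _ _ _
      have e2 : contract j (fun k => φ k ∘ₗ F k) = contract j φ :=
        contract_congr j fun k hk => by
          simp only [hF, Function.update_of_ne hk, LinearMap.comp_id]
      rw [e1, e2]
    rw [h3, hP1 _ (Submodule.subset_span ⟨φ, rfl⟩), sub_self]
  have hQw : PiTensorProduct.map Q w = w := by rwa [sub_eq_zero] at hz
  calc PiTensorProduct.map F v
      = PiTensorProduct.map F (PiTensorProduct.map (fun i => (W i).subtype) w) := by rw [hv]
    _ = PiTensorProduct.map (fun i => (W i).subtype) (PiTensorProduct.map Q w) := by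
        rw [← LinearMap.comp_apply, hmapcomm]; rfl
    _ = v := by rw [hQw, hv]

/-- **Existence and minimality of minimal subspaces.**
For a tensor `v ∈ ⨂ᵢ Vᵢ`: (i) each minimal subspace `Uⱼ(v)` is finite-dimensional;
(ii) `v` belongs to the range of the canonical map `⨂ᵢ Uᵢ(v) → ⨂ᵢ Vᵢ` induced by the
inclusions; (iii) whenever `v` belongs to the range of the canonical map
`⨂ᵢ Nᵢ → ⨂ᵢ Vᵢ` for a family of subspaces `Nᵢ ≤ Vᵢ`, one has `Uⱼ(v) ≤ Nⱼ` for all `j`. -/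
theorem minimalSubspace_finiteDimensional_mem_and_minimal (v : ⨂[𝕜] i, V i) :
    (∀ j, FiniteDimensional 𝕜 (minimalSubspace j v)) ∧
    (v ∈ LinearMap.range (PiTensorProduct.map fun i => (minimalSubspace i v).subtype)) ∧
    (∀ N : ∀ i, Submodule 𝕜 (V i),
      v ∈ LinearMap.range (PiTensorProduct.map fun i => (N i).subtype) →
      ∀ j, minimalSubspace j v ≤ N j) := by
  classical
  obtain ⟨W, hWfd, hvW⟩ := exists_findim v
  haveI : ∀ i, FiniteDimensional 𝕜 (W i) := hWfd
  have hUle : ∀ j, minimalSubspace j v ≤ W j := minimalSubspace_le v W hvW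
  refine ⟨fun j => Submodule.finiteDimensional_of_le (hUle j), ?_,
    fun N hN j => minimalSubspace_le v N hN j⟩
  -- (ii)
  obtain ⟨w, hv⟩ := hvW
  -- choose projections onto the minimal subspaces
  have hproj : ∀ i, ∃ P : V i →ₗ[𝕜] V i,
      (∀ x ∈ minimalSubspace i v, P x = x) ∧ (∀ x, P x ∈ minimalSubspace i v) := by
    intro i
    obtain ⟨q, hq⟩ := Submodule.exists_isCompl (minimalSubspace i v)
    refine ⟨(minimalSubspace i v).subtype ∘ₗ Submodule.projectionOnto _ q hq,
      fun x hx => ?_, fun x => Submodule.coe_mem _⟩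
    have := Submodule.linearProjOfIsCompl_apply_left hq ⟨x, hx⟩
    simp only [LinearMap.comp_apply, Submodule.coe_subtype]
    rw [show x = ((⟨x, hx⟩ : minimalSubspace i v) : V i) from rfl, this]
  choose P hP1 hP2 using hproj
  have main : ∀ s : Finset ι,
      PiTensorProduct.map (fun i => if i ∈ s then P i else LinearMap.id) v = v := by
    intro s
    induction s using Finset.induction with
    | empty =>
      have : (fun i => if i ∈ (∅ : Finset ι) then P i else LinearMap.id)
          = fun i => (LinearMap.id : V i →ₗ[𝕜] V i) := by
        funext i; simp
      rw [this, PiTensorProduct.map_id, LinearMap.id_apply]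
    | @insert j s hj ih =>
      have hsplit : (fun i => if i ∈ insert j s then P i else LinearMap.id)
          = fun i => (if i ∈ s then P i else LinearMap.id) ∘ₗ
              (Function.update (fun i => (LinearMap.id : V i →ₗ[𝕜] V i)) j (P j)) i := by
        funext i
        rcases eq_or_ne i j with rfl | hij
        · simp [Function.update_self, hj]
        · simp [Function.update_of_ne hij, Finset.mem_insert, hij]
      rw [hsplit, PiTensorProduct.map_comp, LinearMap.comp_apply,
        map_update_proj v W hWfd w hv j (P j) (hP1 j) (hP2 j), ih]
  have hfinal : PiTensorProduct.map (fun i => P i) v = v := by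
    have : (fun i => if i ∈ (Finset.univ : Finset ι) then P i else LinearMap.id)
        = fun i => P i := by
      funext i; simp
    rw [← this, main Finset.univ]
  refine ⟨PiTensorProduct.map
    (fun i => (P i).codRestrict (minimalSubspace i v) (hP2 i)) v, ?_⟩
  rw [← LinearMap.comp_apply, ← PiTensorProduct.map_comp]
  have : (fun i => (minimalSubspace i v).subtype ∘ₗ
      (P i).codRestrict (minimalSubspace i v) (hP2 i)) = fun i => P i := by
    funext i
    exact LinearMap.subtype_comp_codRestrict _ _ _
  rw [this, hfinal]

end
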